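/- For every λ > 0, ∫₀^1 (1 - e^{-λu})/u du ≤ 0.95 + max(log λ, 0). -/

import Mathlib

open Real MeasureTheory intervalIntegral Set

private lemma mono_aux (f f' : ℝ → ℝ) (hf : ∀ x, HasDerivAt f (f' x) x)
    (hf' : ∀ x, 0 ≤ x → 0 ≤ f' x) {x : ℝ} (hx : 0 ≤ x) : f 0 ≤ f x := by
  have hmono : MonotoneOn f (Set.Ici (0:ℝ)) := by
    apply monotoneOn_of_deriv_nonneg (convex_Ici 0)
      (fun y _ => (hf y).continuousAt.continuousWithinAt)
      (fun y _ => (hf y).differentiableAt.differentiableWithinAt)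
    intro y hy
    rw [(hf y).deriv]
    exact hf' y (le_of_lt (by simpa using hy))
  exact hmono Set.self_mem_Ici hx hx

private lemma exp_neg_quad {x : ℝ} (hx : 0 ≤ x) : Real.exp (-x) ≤ 1 - x + x^2/2 := by
  have key := mono_aux (fun t => 1 - t + t^2/2 - Real.exp (-t))
      (fun t => -1 + t + Real.exp (-t)) ?_ ?_ hx
  · simp only [neg_zero, Real.exp_zero] at key
    nlinarith [key]
  · intro t
    have h1 : HasDerivAt (fun t : ℝ => Real.exp (-t)) (-Real.exp (-t)) t := by
      have := (Real.hasDerivAt_exp (-t)).comp t (hasDerivAt_neg t)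
      simpa [mul_comm, Function.comp_def] using this
    have h2 : HasDerivAt (fun t : ℝ => 1 - t + t^2/2) (-1 + t) t := by
      have : HasDerivAt (fun t : ℝ => 1 - t + t^2/2) (0 - 1 + (2 * t^1)/2) t := by
        exact (((hasDerivAt_const t (1:ℝ)).sub (hasDerivAt_id t)).add
          (((hasDerivAt_pow 2 t)).div_const 2))
      convert this using 1; ring
    have := h2.sub h1
    exact this.congr_deriv (by ring)
  · intro t ht
    show (0:ℝ) ≤ -1 + t + Real.exp (-t)
    have := Real.add_one_le_exp (-t)
    linarith
private lemma one_sub_exp_cubic {x : ℝ} (hx : 0 ≤ x) :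
    1 - Real.exp (-x) ≤ x - x^2/2 + x^3/6 := by
  have key := mono_aux (fun t => t - t^2/2 + t^3/6 - (1 - Real.exp (-t)))
      (fun t => 1 - t + t^2/2 - Real.exp (-t)) ?_ ?_ hx
  · simp only [neg_zero, Real.exp_zero] at key
    nlinarith [key]
  · intro t
    have h1 : HasDerivAt (fun t : ℝ => Real.exp (-t)) (-Real.exp (-t)) t := by
      have := (Real.hasDerivAt_exp (-t)).comp t (hasDerivAt_neg t)
      simpa [mul_comm, Function.comp_def] using this
    have h2 : HasDerivAt (fun t : ℝ => t - t^2/2 + t^3/6)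
        (1 - (2*t^1)/2 + (3*t^2)/6) t :=
      (((hasDerivAt_id t).sub ((hasDerivAt_pow 2 t).div_const 2)).add
        ((hasDerivAt_pow 3 t).div_const 6))
    have := h2.sub ((hasDerivAt_const t (1:ℝ)).sub h1)
    exact this.congr_deriv (by ring)
  · intro t ht
    show (0:ℝ) ≤ 1 - t + t^2/2 - Real.exp (-t)
    have := exp_neg_quad ht
    linarith

theorem integral_one_sub_exp_div_le (lam : ℝ) (hlam : 0 < lam) :
    ∫ u in (0:ℝ)..1, (1 - Real.exp (-lam * u)) / u ≤ 0.95 + max (Real.log lam) 0 := by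
  set f : ℝ → ℝ := fun u => (1 - Real.exp (-lam * u)) / u with hf
  -- pointwise bounds
  have hfle : ∀ u : ℝ, 0 ≤ u → f u ≤ lam - lam^2/2*u + lam^3/6*u^2 := by
    intro u hu
    rcases eq_or_lt_of_le hu with h | h
    · simp [hf, ← h]
      nlinarith
    · have key := one_sub_exp_cubic (x := lam * u) (by positivity)
      rw [hf]
      rw [div_le_iff₀ h]
      calc 1 - Real.exp (-lam * u) = 1 - Real.exp (-(lam * u)) := by ring_nf
        _ ≤ lam*u - (lam*u)^2/2 + (lam*u)^3/6 := key
        _ = (lam - lam^2/2*u + lam^3/6*u^2) * u := by ring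
  have hfnonneg : ∀ u : ℝ, 0 ≤ u → 0 ≤ f u := by
    intro u hu
    apply div_nonneg _ hu
    have : Real.exp (-lam * u) ≤ 1 := by
      rw [Real.exp_le_one_iff]
      nlinarith
    linarith
  have hfb : ∀ u : ℝ, 0 ≤ u → f u ≤ lam := by
    intro u hu
    rcases eq_or_lt_of_le hu with h | h
    · simp [hf, ← h]; exact hlam.le
    · rw [hf, div_le_iff₀ h]
      have := Real.add_one_le_exp (-lam * u)
      nlinarith
  have hmeas : Measurable f := by
    apply Measurable.div
    · exact measurable_const.sub ((measurable_id.const_mul (-lam)).exp)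
    · exact measurable_id
  -- integrability of f on any subinterval of [0,1]
  have hint : ∀ a b : ℝ, 0 ≤ a → a ≤ b → b ≤ 1 → IntervalIntegrable f volume a b := by
    intro a b ha hab hb1
    rw [intervalIntegrable_iff_integrableOn_Ioc_of_le hab]
    refine Integrable.mono' (integrable_const lam) hmeas.aestronglyMeasurable.restrict ?_
    filter_upwards [ae_restrict_mem measurableSet_Ioc] with u hu
    rw [Real.norm_eq_abs, abs_of_nonneg (hfnonneg u (le_of_lt (lt_of_le_of_lt ha hu.1)))]
    exact hfb u (le_of_lt (lt_of_le_of_lt ha hu.1))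
  -- polynomial integral
  have hP : ∀ a : ℝ, ∫ u in (0:ℝ)..a, (lam - lam^2/2*u + lam^3/6*u^2)
      = lam*a - lam^2/4*a^2 + lam^3/18*a^3 := by
    intro a
    have c1 : IntervalIntegrable (fun _ : ℝ => lam) volume 0 a :=
      intervalIntegrable_const
    have c2 : IntervalIntegrable (fun u : ℝ => lam^2/2*u) volume 0 a :=
      (continuous_const.mul continuous_id).intervalIntegrable _ _
    have c3 : IntervalIntegrable (fun u : ℝ => lam^3/6*u^2) volume 0 a :=
      (continuous_const.mul (continuous_pow 2)).intervalIntegrable _ _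
    rw [intervalIntegral.integral_add (c1.sub c2) c3, intervalIntegral.integral_sub c1 c2,
      intervalIntegral.integral_const, intervalIntegral.integral_const_mul,
      intervalIntegral.integral_const_mul, integral_id, integral_pow]
    push_cast
    simp only [smul_eq_mul]
    ring
  have hPint : ∀ a : ℝ, IntervalIntegrable (fun u : ℝ => lam - lam^2/2*u + lam^3/6*u^2)
      volume 0 a := by
    intro a
    exact (Continuous.intervalIntegrable (by continuity) _ _)
  rcases le_or_gt lam 1 with hle | hgt
  · -- small lambda
    have h1 : ∫ u in (0:ℝ)..1, f u ≤ ∫ u in (0:ℝ)..1, (lam - lam^2/2*u + lam^3/6*u^2) := by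
      apply intervalIntegral.integral_mono_on zero_le_one (hint 0 1 le_rfl zero_le_one le_rfl)
        (hPint 1)
      intro u hu
      exact hfle u hu.1
    rw [hP 1] at h1
    have hmax : (0:ℝ) ≤ max (Real.log lam) 0 := le_max_right _ _
    have : lam*1 - lam^2/4*1^2 + lam^3/18*1^3 ≤ 0.95 := by
      nlinarith [mul_nonneg (sub_nonneg.2 hle) (sq_nonneg lam), sq_nonneg lam,
        mul_nonneg (sub_nonneg.2 hle) hlam.le]
    calc ∫ u in (0:ℝ)..1, f u ≤ lam*1 - lam^2/4*1^2 + lam^3/18*1^3 := h1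
      _ ≤ 0.95 := this
      _ ≤ 0.95 + max (Real.log lam) 0 := by linarith
  · -- large lambda : split at 1/lam
    set a : ℝ := 1/lam with ha
    have ha0 : 0 < a := by positivity
    have ha1 : a ≤ 1 := by rw [ha]; rw [div_le_one hlam]; linarith
    have hsplit : (∫ u in (0:ℝ)..a, f u) + (∫ u in a..1, f u) = ∫ u in (0:ℝ)..1, f u :=
      intervalIntegral.integral_add_adjacent_intervals
        (hint 0 a le_rfl ha0.le ha1) (hint a 1 ha0.le ha1 le_rfl)
    have h1 : ∫ u in (0:ℝ)..a, f u ≤ 29/36 := by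
      have := intervalIntegral.integral_mono_on ha0.le (hint 0 a le_rfl ha0.le ha1)
        (hPint a) (fun u hu => hfle u hu.1)
      rw [hP a] at this
      have heq : lam*a - lam^2/4*a^2 + lam^3/18*a^3 = 29/36 := by
        rw [ha]; field_simp; ring
      linarith
    have h2 : ∫ u in a..1, f u ≤ Real.log lam := by
      have hmono : ∫ u in a..1, f u ≤ ∫ u in a..1, 1/u := by
        apply intervalIntegral.integral_mono_on ha1 (hint a 1 ha0.le ha1 le_rfl)
        · apply ContinuousOn.intervalIntegrable
          apply ContinuousOn.div continuousOn_const continuousOn_id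
          intro x hx
          rw [Set.uIcc_of_le ha1] at hx
          exact ne_of_gt (lt_of_lt_of_le ha0 hx.1)
        · intro u hu
          have hu0 : 0 < u := lt_of_lt_of_le ha0 hu.1
          rw [hf, div_le_div_iff₀ hu0 hu0]
          have : Real.exp (-lam * u) ≤ 1 := by
            rw [Real.exp_le_one_iff]; nlinarith
          have h0 : 0 ≤ Real.exp (-lam*u) := (Real.exp_pos _).le
          nlinarith
      have hlog : ∫ u in a..1, (1:ℝ)/u = Real.log lam := by
        rw [integral_one_div]
        · rw [ha, one_div_one_div]
        · rw [Set.uIcc_of_le ha1]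
          intro hmem
          exact absurd hmem.1 (not_le.2 ha0)
      linarith
    have hmax : Real.log lam ≤ max (Real.log lam) 0 := le_max_left _ _
    have : (29:ℝ)/36 ≤ 0.95 := by norm_num
    linarith [hsplit]
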